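/- Let F be a finite field with q elements and fix a, b, c, d, e ∈ F. Then the set { (1/x)·(a·x² − y² + b·x·y + c·y + e) + d : x, y ∈ F, x ≠ 0 } has at least q − 1 elements. -/

import Mathlib

theorem stmt_3 (F : Type*) [Field F] [Fintype F] (a b c d e : F) :
    Fintype.card F - 1 ≤
      Set.ncard {t : F | ∃ x y : F, x ≠ 0 ∧
        t = x⁻¹ * (a * x ^ 2 - y ^ 2 + b * x * y + c * y + e) + d} := by
  set S : Set F := {t : F | ∃ x y : F, x ≠ 0 ∧
        t = x⁻¹ * (a * x ^ 2 - y ^ 2 + b * x * y + c * y + e) + d} with hSdef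
  have hfin : S.Finite := Set.toFinite S
  -- membership via y = μ x + ν
  have hmem : ∀ (μ ν x : F), x ≠ 0 →
      (a + b*μ - μ^2) * x + ((b - 2*μ)*ν + c*μ) + (e + c*ν - ν^2) * x⁻¹ + d ∈ S := by
    intro μ ν x hx
    refine ⟨x, μ*x+ν, hx, ?_⟩
    field_simp
    ring
  have hcompl : (({0}ᶜ : Set F)).ncard = Fintype.card F - 1 := by
    rw [Set.compl_eq_univ_diff, Set.ncard_diff (by simp), Set.ncard_univ,
      Set.ncard_singleton, Nat.card_eq_fintype_card]
  have key : ∀ α β : F, α ≠ 0 → (∀ z : F, z ≠ 0 → α * z + β ∈ S) →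
      Fintype.card F - 1 ≤ S.ncard := by
    intro α β hα h
    have hinj : Set.InjOn (fun z : F => α * z + β) {0}ᶜ := by
      intro u _ v _ huv
      exact mul_left_cancel₀ hα (by simpa using huv)
    have hsub : (fun z : F => α * z + β) '' {0}ᶜ ⊆ S := by
      rintro t ⟨z, hz, rfl⟩
      exact h z (by simpa using hz)
    calc Fintype.card F - 1 = (({0}ᶜ : Set F)).ncard := hcompl.symm
      _ = ((fun z : F => α * z + β) '' {0}ᶜ).ncard := (Set.ncard_image_of_injOn hinj).symm
      _ ≤ S.ncard := Set.ncard_le_ncard hsub hfin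
  by_cases hq : Fintype.card F ≤ 2
  · have hne : S.Nonempty := ⟨_, hmem 0 0 1 one_ne_zero⟩
    have h1 : 0 < S.ncard := (Set.ncard_pos hfin).mpr hne
    omega
  push_neg at hq
  have quad_nonroot : ∀ u v : F, ∃ μ : F, u + v*μ - μ^2 ≠ 0 := by
    intro u v
    by_contra h
    push_neg at h
    have hu : u = 0 := by have := h 0; linear_combination this
    have h2 : ∀ μ : F, μ = 0 ∨ μ = v := by
      intro μ
      have hμ := h μ
      have hμ' : μ * (v - μ) = 0 := by linear_combination hμ - hu
      rcases mul_eq_zero.1 hμ' with h' | h'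
      · exact Or.inl h'
      · exact Or.inr (sub_eq_zero.1 h').symm
    have hsub : (Set.univ : Set F) ⊆ {0, v} := by
      intro μ _
      rcases h2 μ with h' | h' <;> simp [h']
    have hle := Set.ncard_le_ncard hsub (Set.toFinite _)
    rw [Set.ncard_univ, Nat.card_eq_fintype_card] at hle
    have hv : ({0, v} : Set F).ncard ≤ 2 := by
      calc ({0, v} : Set F).ncard ≤ ({v} : Set F).ncard + 1 := Set.ncard_insert_le 0 {v}
        _ ≤ 2 := by rw [Set.ncard_singleton]
    omega
  by_cases hK : ∃ ν : F, e + c*ν - ν^2 = 0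
  · -- Case I
    obtain ⟨ν₀, hν⟩ := hK
    obtain ⟨μ₀, hμ⟩ := quad_nonroot a b
    apply key _ ((b - 2*μ₀)*ν₀ + c*μ₀ + d) hμ
    intro z hz
    have h1 : (a + b*μ₀ - μ₀^2) * z + ((b - 2*μ₀)*ν₀ + c*μ₀ + d)
        = (a + b*μ₀ - μ₀^2) * z + ((b - 2*μ₀)*ν₀ + c*μ₀) + (e + c*ν₀ - ν₀^2) * z⁻¹ + d := by
      rw [hν]; ring
    rw [h1]; exact hmem μ₀ ν₀ z hz
  push_neg at hK
  by_cases hP : ∃ μ : F, a + b*μ - μ^2 = 0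
  · -- Case II
    obtain ⟨μ₀, hμ⟩ := hP
    have he : e ≠ 0 := by have := hK 0; intro h; apply this; rw [h]; ring
    apply key e (c*μ₀ + d) he
    intro z hz
    have h1 : e * z + (c*μ₀ + d)
        = (a + b*μ₀ - μ₀^2) * z⁻¹ + ((b - 2*μ₀)*0 + c*μ₀) + (e + c*0 - 0^2) * (z⁻¹)⁻¹ + d := by
      rw [hμ, inv_inv]; ring
    rw [h1]; exact hmem μ₀ 0 z⁻¹ (inv_ne_zero hz)
  push_neg at hP
  -- Case III: both quadratics have no roots; show S = univ
  have huniv : ∀ t : F, t ∈ S := by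
    intro t
    by_cases hchar : ringChar F = 2
    · -- char 2
      have h2 : (2:F) = 0 := by
        haveI := ringChar.charP F
        have := CharP.cast_eq_zero F (ringChar F)
        rw [hchar] at this
        exact_mod_cast this
      have hb : b ≠ 0 := by
        intro hb0
        obtain ⟨r, hr⟩ := FiniteField.isSquare_of_char_two hchar a
        exact hP r (by rw [hb0]; linear_combination hr - r^2*h2 + r*r*h2)
      have hc : c ≠ 0 := by
        intro hc0
        obtain ⟨r, hr⟩ := FiniteField.isSquare_of_char_two hchar e
        exact hK r (by rw [hc0]; linear_combination hr - r^2*h2 + r*r*h2)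
      set x₀ : F := c * b⁻¹ with hx₀def
      have hx₀ : x₀ ≠ 0 := mul_ne_zero hc (inv_ne_zero hb)
      have hbx : b * x₀ = c := by
        rw [hx₀def, mul_comm c, ← mul_assoc, mul_inv_cancel₀ hb, one_mul]
      obtain ⟨y, hy⟩ := FiniteField.isSquare_of_char_two hchar
        (a * x₀^2 + e - (t - d)*x₀)
      refine ⟨x₀, y, hx₀, ?_⟩
      have heq : a * x₀ ^ 2 - y ^ 2 + b * x₀ * y + c * y + e = (t - d) * x₀ := by
        linear_combination -hy + y*hbx + c*y*h2 + (a*x₀^2 - t*x₀ + d*x₀ - y^2 + e)*h2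
      rw [heq]
      field_simp
      ring
    · -- odd characteristic
      have hodd : Fintype.card F % 2 = 1 := FiniteField.odd_card_of_char_ne_two hchar
      have h2 : (2:F) ≠ 0 := by
        intro h
        apply hchar
        exact (CharP.ringChar_of_prime_eq_zero Nat.prime_two (by exact_mod_cast h))
      set A : F := b^2 + 4*a with hA
      set B : F := 2*b*c - 4*(t - d) with hB
      set C0 : F := c^2 + 4*e with hC0
      have hAne : A ≠ 0 := by
        intro h
        apply hP (b/2)
        field_simp
        linear_combination h
      obtain ⟨s, x, hsx⟩ := FiniteField.exists_root_sum_quadratic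
        (f := (Polynomial.X : Polynomial F)^2)
        (g := Polynomial.C (-A) * Polynomial.X^2 + Polynomial.C (-B) * Polynomial.X
          + Polynomial.C (-C0))
        (Polynomial.degree_X_pow 2) (Polynomial.degree_quadratic (neg_ne_zero.mpr hAne)) hodd
      simp only [Polynomial.eval_add, Polynomial.eval_mul, Polynomial.eval_pow,
        Polynomial.eval_C, Polynomial.eval_X] at hsx
      have hsx' : s^2 = A*x^2 + B*x + C0 := by linear_combination hsx
      have hx : x ≠ 0 := by
        intro hx0
        apply hK ((c+s)/2)
        rw [hx0] at hsx'
        field_simp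
        linear_combination (-1)*hsx'
      refine ⟨x, (b*x + c + s)/2, hx, ?_⟩
      have heq : a * x ^ 2 - ((b*x+c+s)/2) ^ 2 + b * x * ((b*x+c+s)/2)
          + c * ((b*x+c+s)/2) + e = (t - d) * x := by
        field_simp
        linear_combination (-1)*hsx'
      rw [heq]
      field_simp
      ring
  have : S = Set.univ := Set.eq_univ_of_forall huniv
  rw [this, Set.ncard_univ, Nat.card_eq_fintype_card]
  omega
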